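/- Let S₀ ⊆ ℝⁿ_{≥0} be a nonempty finite set, P := conv(S₀) + ℝⁿ_{≥0}, and for u ∈ ℝⁿ_{≥0} let N(u) := inf{⟨u, w⟩ : w ∈ P}. Fix W ∈ P and set σ := {u ∈ ℝⁿ_{≥0} : ⟨u, W⟩ = N(u)}; for δ > 0 set N_{≤δ} := {u ∈ ℝⁿ_{≥0} : ⟨u, W⟩ − N(u) ≤ δ⟨u, 𝟙⟩} and N_{δ} := {u ∈ ℝⁿ_{≥0} : ⟨u, W⟩ − N(u) = δ⟨u, 𝟙⟩}, where 𝟙 = (1,…,1). Let C ⊆ ℝⁿ_{≥0} be a polyhedral cone (the conical hull of a finite set) and suppose there is V₀ ∈ P with N(u) = ⟨u, V₀⟩ for all u ∈ C. Assume C ∩ σ ≠ {0} and C ⊄ σ. Then there exists δ₀ > 0 such that for all δ with 0 < δ < δ₀: dim(C ∩ N_{≤δ}) = dim C and dim(C ∩ N_{δ}) = dim C − 1, where the dimension of a set containing 0 is the dimension of its linear span; moreover C ∩ N_δ is a proper exposed face of the cone C ∩ N_{≤δ} that is not contained in any proper exposed face of C, and every other proper exposed face of C ∩ N_{≤δ}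 is contained in some proper exposed face of C. -/

import Mathlib

open scoped Pointwise

noncomputable section

/-- The standard inner product on `ℝⁿ`. -/
def ip {n : ℕ} (u w : Fin n → ℝ) : ℝ := ∑ i, u i * w i

/-- The nonnegative orthant `ℝⁿ_{≥0}`. -/
def orthant (n : ℕ) : Set (Fin n → ℝ) := {x | ∀ i, 0 ≤ x i}

/-- The all-ones vector `𝟙 = (1,…,1)`. -/
def allOnes (n : ℕ) : Fin n → ℝ := fun _ => 1

/-- `F` is an exposed face of the convex set `K`: the set of points of `K`
maximizing some linear functional. -/
def IsExpFace {n : ℕ} (K F : Set (Fin n → ℝ)) : Prop :=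
  ∃ u : Fin n → ℝ, F = {x ∈ K | ∀ y ∈ K, ip y u ≤ ip x u}

/-- The dimension of a set containing `0`: the dimension of its linear span. -/
def sdim {n : ℕ} (S : Set (Fin n → ℝ)) : ℕ :=
  Module.finrank ℝ ↥(Submodule.span ℝ S)

lemma ip_add_left {n : ℕ} (x y w : Fin n → ℝ) : ip (x + y) w = ip x w + ip y w := by
  simp [ip, add_mul, Finset.sum_add_distrib]

lemma ip_smul_left {n : ℕ} (c : ℝ) (x w : Fin n → ℝ) : ip (c • x) w = c * ip x w := by
  simp [ip, Finset.mul_sum, mul_assoc]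

lemma ip_zero_left {n : ℕ} (w : Fin n → ℝ) : ip 0 w = 0 := by simp [ip]

lemma ip_sub_left {n : ℕ} (x y w : Fin n → ℝ) : ip (x - y) w = ip x w - ip y w := by
  simp [ip, sub_mul, Finset.sum_sub_distrib]

lemma ip_sum_left {n : ℕ} {α : Type*} (s : Finset α) (f : α → Fin n → ℝ) (w : Fin n → ℝ) :
    ip (∑ v ∈ s, f v) w = ∑ v ∈ s, ip (f v) w := by
  simp only [ip, Finset.sum_apply, Finset.sum_mul]
  exact Finset.sum_comm

lemma ip_sub_right {n : ℕ} (x y w : Fin n → ℝ) : ip x (y - w) = ip x y - ip x w := by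
  simp [ip, mul_sub, Finset.sum_sub_distrib]

lemma ip_smul_right {n : ℕ} (c : ℝ) (x w : Fin n → ℝ) : ip x (c • w) = c * ip x w := by
  simp only [ip, Finset.mul_sum, Pi.smul_apply, smul_eq_mul]
  exact Finset.sum_congr rfl fun i _ => by ring

lemma ip_wvec {n : ℕ} (u W V₀ : Fin n → ℝ) (δ : ℝ) :
    ip u (fun i => W i - V₀ i - δ) = ip u W - ip u V₀ - δ * ip u (allOnes n) := by
  simp only [ip, allOnes, mul_sub, Finset.sum_sub_distrib, Finset.mul_sum, mul_one]
  congr 1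
  exact Finset.sum_congr rfl fun i _ => by ring

lemma ip_addsmul {n : ℕ} (x z : Fin n → ℝ) (t : ℝ) (w : Fin n → ℝ) :
    ip (x + t • z) w = ip x w + t * ip z w := by
  rw [ip_add_left, ip_smul_left]

/-- `ip · w` as a linear map. -/
def ipR {n : ℕ} (w : Fin n → ℝ) : (Fin n → ℝ) →ₗ[ℝ] ℝ where
  toFun x := ip x w
  map_add' x y := ip_add_left x y w
  map_smul' c x := ip_smul_left c x w

@[simp] lemma ipR_apply {n : ℕ} (w x : Fin n → ℝ) : ipR w x = ip x w := rfl

lemma max_sub_max_neg (a : ℝ) : max a 0 - max (-a) 0 = a := by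
  rcases le_total 0 a with h | h
  · rw [max_eq_left h, max_eq_right (neg_nonpos.mpr h)]; ring
  · rw [max_eq_right h, max_eq_left (neg_nonneg.mpr h)]; ring

set_option maxHeartbeats 2000000 in
/-- Structure of the intersection of a cone of a refining fan with the
polyhedral neighborhoods `N_{M,≤δ}` and `N_{M,δ}` for small `δ`. -/
theorem cone_inter_neighborhood_structure {n : ℕ}
    (S₀ : Finset (Fin n → ℝ)) (hS₀ : S₀.Nonempty)
    (hS₀nn : ∀ v ∈ S₀, ∀ i, 0 ≤ v i)
    (P : Set (Fin n → ℝ)) (hP : P = convexHull ℝ (S₀ : Set (Fin n → ℝ)) + orthant n)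
    (N : (Fin n → ℝ) → ℝ) (hN : ∀ u, N u = sInf ((fun w => ip u w) '' P))
    (W : Fin n → ℝ) (hW : W ∈ P)
    (σ : Set (Fin n → ℝ)) (hσ : σ = {u ∈ orthant n | ip u W = N u})
    (Nle Neq : ℝ → Set (Fin n → ℝ))
    (hNle : ∀ δ, Nle δ = {u ∈ orthant n | ip u W - N u ≤ δ * ip u (allOnes n)})
    (hNeq : ∀ δ, Neq δ = {u ∈ orthant n | ip u W - N u = δ * ip u (allOnes n)})
    (C : Set (Fin n → ℝ)) (hCsub : C ⊆ orthant n)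
    (hCgen : ∃ G : Finset (Fin n → ℝ), C = {x | ∃ lam : (Fin n → ℝ) → ℝ,
      (∀ v ∈ G, 0 ≤ lam v) ∧ x = ∑ v ∈ G, lam v • v})
    (V₀ : Fin n → ℝ) (hV₀ : V₀ ∈ P) (hNC : ∀ u ∈ C, N u = ip u V₀)
    (hCσ : C ∩ σ ≠ {0}) (hCnotsub : ¬ C ⊆ σ) :
    ∃ δ₀ > (0 : ℝ), ∀ δ : ℝ, 0 < δ → δ < δ₀ →
      (sdim (C ∩ Nle δ) = sdim C) ∧
      (sdim (C ∩ Neq δ) = sdim C - 1) ∧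
      (IsExpFace (C ∩ Nle δ) (C ∩ Neq δ) ∧ C ∩ Neq δ ≠ C ∩ Nle δ) ∧
      (∀ F : Set (Fin n → ℝ), IsExpFace C F → F ≠ C → ¬ (C ∩ Neq δ ⊆ F)) ∧
      (∀ F' : Set (Fin n → ℝ), IsExpFace (C ∩ Nle δ) F' → F' ≠ C ∩ Nle δ →
        F' ≠ C ∩ Neq δ → ∃ F : Set (Fin n → ℝ), IsExpFace C F ∧ F ≠ C ∧ F' ⊆ F) := by
  classical
  obtain ⟨G, hG⟩ := hCgen
  -- basic cone facts
  have hC0 : (0 : Fin n → ℝ) ∈ C := by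
    rw [hG]; exact ⟨0, fun v _ => le_refl 0, by simp⟩
  have hCadd : ∀ x ∈ C, ∀ y ∈ C, x + y ∈ C := by
    intro x hx y hy
    rw [hG] at hx hy ⊢
    obtain ⟨lam, hlam, rfl⟩ := hx
    obtain ⟨mu, hmu, rfl⟩ := hy
    refine ⟨lam + mu, fun v hv => add_nonneg (hlam v hv) (hmu v hv), ?_⟩
    rw [← Finset.sum_add_distrib]
    exact Finset.sum_congr rfl fun v _ => by simp [add_smul]
  have hCsmul : ∀ (c : ℝ), 0 ≤ c → ∀ x ∈ C, c • x ∈ C := by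
    intro c hc x hx
    rw [hG] at hx ⊢
    obtain ⟨lam, hlam, rfl⟩ := hx
    refine ⟨fun v => c * lam v, fun v hv => mul_nonneg hc (hlam v hv), ?_⟩
    rw [Finset.smul_sum]
    exact Finset.sum_congr rfl fun v _ => by rw [smul_smul]
  have hGC : ∀ v ∈ G, v ∈ C := by
    intro v hv
    rw [hG]
    refine ⟨fun w => if w = v then 1 else 0, fun w _ => by dsimp only; split <;> norm_num, ?_⟩
    rw [Finset.sum_congr rfl (fun w _ => show (if w = v then (1:ℝ) else 0) • w
      = if w = v then w else 0 by split <;> simp), Finset.sum_ite_eq' G v (fun w => w)]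
    simp [hv]
  have hipC : ∀ x ∈ C, ∀ w : Fin n → ℝ, (∀ v ∈ G, ip v w ≤ 0) → ip x w ≤ 0 := by
    intro x hx w hw
    rw [hG] at hx
    obtain ⟨lam, hlam, rfl⟩ := hx
    rw [ip_sum_left]
    refine Finset.sum_nonpos fun v hv => ?_
    rw [ip_smul_left]
    exact mul_nonpos_of_nonneg_of_nonpos (hlam v hv) (hw v hv)
  -- P is in the orthant, and N is a lower bound of ⟨u,·⟩ on P
  have hPorth : P ⊆ orthant n := by
    rw [hP]
    intro x hx
    rw [Set.mem_add] at hx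
    obtain ⟨a, ha, b, hb, rfl⟩ := hx
    have hconv : Convex ℝ (orthant n) := by
      intro x hx y hy s t hs ht hst i
      have := add_nonneg (mul_nonneg hs (hx i)) (mul_nonneg ht (hy i))
      simpa using this
    have hS : (S₀ : Set (Fin n → ℝ)) ⊆ orthant n := fun v hv i => hS₀nn v (by exact_mod_cast hv) i
    have ha' : a ∈ orthant n := convexHull_min hS hconv ha
    intro i
    exact add_nonneg (ha' i) (hb i)
  have hipnn : ∀ u ∈ orthant n, ∀ w ∈ orthant n, 0 ≤ ip u w := by
    intro u hu w hw
    exact Finset.sum_nonneg fun i _ => mul_nonneg (hu i) (hw i)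
  have hNleW : ∀ u ∈ orthant n, N u ≤ ip u W := by
    intro u hu
    rw [hN]
    refine csInf_le ⟨0, ?_⟩ ⟨W, hW, rfl⟩
    rintro r ⟨w, hw, rfl⟩
    exact hipnn u hu w (hPorth hw)
  have hN0 : N 0 = 0 := by
    rw [hN]
    have : (fun w => ip (0 : Fin n → ℝ) w) '' P = {0} := by
      rw [show (fun w => ip (0 : Fin n → ℝ) w) = fun _ => (0:ℝ) from funext fun w => ip_zero_left w]
      exact Set.Nonempty.image_const ⟨W, hW⟩ 0
    rw [this, csInf_singleton]
  -- nonnegativity of f and g on C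
  have hfnn : ∀ u ∈ C, 0 ≤ ip u W - ip u V₀ := by
    intro u hu
    have := hNleW u (hCsub hu)
    rw [hNC u hu] at this
    linarith
  have hgpos : ∀ u ∈ C, u ≠ 0 → 0 < ip u (allOnes n) := by
    intro u hu hne
    have h1 : 0 ≤ ip u (allOnes n) :=
      Finset.sum_nonneg fun i _ => mul_nonneg (hCsub hu i) zero_le_one
    rcases h1.lt_or_eq with h | h
    · exact h
    · exfalso
      apply hne
      have := (Finset.sum_eq_zero_iff_of_nonneg
        (fun i _ => mul_nonneg (hCsub hu i) zero_le_one)).mp h.symm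
      funext i
      have := this i (Finset.mem_univ i)
      simpa [allOnes] using this
  -- pick u₀ and u₁
  have h0σ : (0 : Fin n → ℝ) ∈ σ := by
    rw [hσ]
    refine ⟨fun i => le_refl 0, ?_⟩
    rw [hN0, ip_zero_left]
  have hmemσ : ∀ u ∈ C, (u ∈ σ ↔ ip u W - ip u V₀ = 0) := by
    intro u hu
    rw [hσ]
    constructor
    · rintro ⟨-, h⟩; rw [hNC u hu] at h; linarith
    · intro h; exact ⟨hCsub hu, by rw [hNC u hu]; linarith⟩
  obtain ⟨u₀, hu₀Cσ, hu₀ne⟩ : ∃ u₀, u₀ ∈ C ∩ σ ∧ u₀ ≠ 0 := by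
    by_contra h
    push_neg at h
    apply hCσ
    ext x
    simp only [Set.mem_singleton_iff]
    constructor
    · intro hx; by_contra hne; exact hne (h x hx)
    · rintro rfl; exact ⟨hC0, h0σ⟩
  have hu₀C : u₀ ∈ C := hu₀Cσ.1
  have hfu₀ : ip u₀ W - ip u₀ V₀ = 0 := (hmemσ u₀ hu₀C).mp hu₀Cσ.2
  have hgu₀ : 0 < ip u₀ (allOnes n) := hgpos u₀ hu₀C hu₀ne
  obtain ⟨u₁, hu₁C, hu₁σ⟩ : ∃ u₁ ∈ C, u₁ ∉ σ := by
    rw [Set.not_subset] at hCnotsub; exact hCnotsub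
  have hfu₁ : 0 < ip u₁ W - ip u₁ V₀ :=
    ((hfnn u₁ hu₁C).lt_or_eq.resolve_right (fun h => hu₁σ ((hmemσ u₁ hu₁C).mpr h.symm)))
  have hu₁ne : u₁ ≠ 0 := by
    rintro rfl
    rw [ip_zero_left, ip_zero_left] at hfu₁
    linarith
  have hgu₁ : 0 < ip u₁ (allOnes n) := hgpos u₁ hu₁C hu₁ne
  refine ⟨(ip u₁ W - ip u₁ V₀) / ip u₁ (allOnes n), div_pos hfu₁ hgu₁, ?_⟩
  intro δ hδ hδlt
  set wv : Fin n → ℝ := fun i => W i - V₀ i - δ with hwv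
  have hipwv : ∀ u : Fin n → ℝ, ip u wv = ip u W - ip u V₀ - δ * ip u (allOnes n) :=
    fun u => ip_wvec u W V₀ δ
  have hφu₀ : ip u₀ wv = -(δ * ip u₀ (allOnes n)) := by rw [hipwv]; linarith
  have hφu₀neg : ip u₀ wv < 0 := by rw [hφu₀]; nlinarith
  have hφu₁ : 0 < ip u₁ wv := by
    rw [hipwv]
    have : δ * ip u₁ (allOnes n) < ip u₁ W - ip u₁ V₀ := (lt_div_iff₀ hgu₁).mp hδlt
    linarith
  have hφ0 : ip (0 : Fin n → ℝ) wv = 0 := ip_zero_left wv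
  have hmemle : ∀ u ∈ C, (u ∈ Nle δ ↔ ip u wv ≤ 0) := by
    intro u hu
    rw [hNle δ]
    simp only [Set.mem_setOf_eq]
    constructor
    · rintro ⟨-, h⟩; rw [hNC u hu] at h; rw [hipwv]; linarith
    · intro h; rw [hipwv] at h; exact ⟨hCsub hu, by rw [hNC u hu]; linarith⟩
  have hmemeq : ∀ u ∈ C, (u ∈ Neq δ ↔ ip u wv = 0) := by
    intro u hu
    rw [hNeq δ]
    simp only [Set.mem_setOf_eq]
    constructor
    · rintro ⟨-, h⟩; rw [hNC u hu] at h; rw [hipwv]; linarith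
    · intro h; rw [hipwv] at h; exact ⟨hCsub hu, by rw [hNC u hu]; linarith⟩
  have hu₀K : u₀ ∈ C ∩ Nle δ := ⟨hu₀C, (hmemle u₀ hu₀C).mpr (le_of_lt hφu₀neg)⟩
  have h0K : (0 : Fin n → ℝ) ∈ C ∩ Nle δ := ⟨hC0, (hmemle 0 hC0).mpr (le_of_eq hφ0)⟩
  have h0E : (0 : Fin n → ℝ) ∈ C ∩ Neq δ := ⟨hC0, (hmemeq 0 hC0).mpr hφ0⟩
  have hδg₀ : (0:ℝ) < δ * ip u₀ (allOnes n) := by positivity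
  have hproj0 : ∀ x ∈ C, 0 ≤ ip x wv →
      ∃ t : ℝ, 0 ≤ t ∧ x + t • u₀ ∈ C ∧ ip (x + t • u₀) wv = 0 := by
    intro x hx hxw
    have ht : 0 ≤ ip x wv / (δ * ip u₀ (allOnes n)) := div_nonneg hxw (le_of_lt hδg₀)
    refine ⟨_, ht, hCadd x hx _ (hCsmul _ ht u₀ hu₀C), ?_⟩
    rw [ip_addsmul, hφu₀]
    field_simp
    ring
  have hproj1 : ∀ x ∈ C, ip x wv ≤ 0 →
      ∃ t : ℝ, 0 ≤ t ∧ x + t • u₁ ∈ C ∧ ip (x + t • u₁) wv = 0 := by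
    intro x hx hxw
    have ht : 0 ≤ (-(ip x wv)) / ip u₁ wv := div_nonneg (by linarith) (le_of_lt hφu₁)
    refine ⟨_, ht, hCadd x hx _ (hCsmul _ ht u₁ hu₁C), ?_⟩
    rw [ip_addsmul]
    field_simp
    ring
  -- Part A : sdim (C ∩ Nle δ) = sdim C
  have hspanA : Submodule.span ℝ (C ∩ Nle δ) = Submodule.span ℝ C := by
    refine le_antisymm (Submodule.span_mono Set.inter_subset_left) ?_
    rw [Submodule.span_le]
    intro x hx
    rcases le_or_gt (ip x wv) 0 with h | h
    · exact Submodule.subset_span ⟨hx, (hmemle x hx).mpr h⟩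
    · obtain ⟨t, ht, hmem, heq⟩ := hproj0 x hx (le_of_lt h)
      have h1 : x + t • u₀ ∈ C ∩ Nle δ := ⟨hmem, (hmemle _ hmem).mpr (le_of_eq heq)⟩
      have hxe : x = (x + t • u₀) - t • u₀ := by abel
      rw [hxe]
      exact Submodule.sub_mem _ (Submodule.subset_span h1)
        (Submodule.smul_mem _ t (Submodule.subset_span hu₀K))
  have partA : sdim (C ∩ Nle δ) = sdim C := by unfold sdim; rw [hspanA]
  -- Part B : sdim (C ∩ Neq δ) = sdim C - 1
  have hVspanG : Submodule.span ℝ C = Submodule.span ℝ (G : Set (Fin n → ℝ)) := by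
    refine le_antisymm ?_ (Submodule.span_mono (fun v hv => hGC v hv))
    rw [Submodule.span_le]
    intro x hx
    rw [hG] at hx
    obtain ⟨lam, -, rfl⟩ := hx
    exact Submodule.sum_mem _ fun v hv =>
      Submodule.smul_mem _ _ (Submodule.subset_span hv)
  have hdecomp : ∀ x ∈ Submodule.span ℝ C, ∃ y ∈ C, ∃ z ∈ C, x = y - z := by
    intro x hx
    rw [hVspanG, Submodule.mem_span_finset] at hx
    obtain ⟨f, -, hf⟩ := hx
    refine ⟨∑ v ∈ G, (max (f v) 0) • v, ?_, ∑ v ∈ G, (max (-f v) 0) • v, ?_, ?_⟩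
    · rw [hG]; exact ⟨fun v => max (f v) 0, fun v _ => le_max_right _ _, rfl⟩
    · rw [hG]; exact ⟨fun v => max (-f v) 0, fun v _ => le_max_right _ _, rfl⟩
    · rw [← hf, ← Finset.sum_sub_distrib]
      exact (Finset.sum_congr rfl fun v _ => by
        rw [← sub_smul, max_sub_max_neg]).symm
  have hspanB : Submodule.span ℝ (C ∩ Neq δ) =
      Submodule.span ℝ C ⊓ LinearMap.ker (ipR wv) := by
    refine le_antisymm ?_ ?_
    · rw [Submodule.span_le]
      intro x hx
      refine Submodule.mem_inf.mpr ⟨Submodule.subset_span hx.1, ?_⟩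
      rw [LinearMap.mem_ker, ipR_apply]
      exact (hmemeq x hx.1).mp hx.2
    · intro x hx
      rw [Submodule.mem_inf, LinearMap.mem_ker, ipR_apply] at hx
      obtain ⟨hxV, hxker⟩ := hx
      obtain ⟨y, hy, z, hz, rfl⟩ := hdecomp x hxV
      rw [ip_sub_left] at hxker
      have hyz : ip y wv = ip z wv := by linarith
      rcases le_or_gt 0 (ip y wv) with hc | hc
      · obtain ⟨t, ht, hmemy, heqy⟩ := hproj0 y hy hc
        obtain ⟨t', ht', hmemz, heqz⟩ := hproj0 z hz (hyz ▸ hc)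
        have hty : t = ip y wv / (δ * ip u₀ (allOnes n)) := by
          rw [ip_addsmul, hφu₀] at heqy
          field_simp at heqy ⊢
          linarith
        have htz : t' = ip z wv / (δ * ip u₀ (allOnes n)) := by
          rw [ip_addsmul, hφu₀] at heqz
          field_simp at heqz ⊢
          linarith
        have htt : t = t' := by rw [hty, htz, hyz]
        have hxe : y - z = (y + t • u₀) - (z + t' • u₀) := by rw [htt]; abel
        rw [hxe]
        exact Submodule.sub_mem _
          (Submodule.subset_span ⟨hmemy, (hmemeq _ hmemy).mpr heqy⟩)
          (Submodule.subset_span ⟨hmemz, (hmemeq _ hmemz).mpr heqz⟩)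
      · obtain ⟨t, ht, hmemy, heqy⟩ := hproj1 y hy (le_of_lt hc)
        obtain ⟨t', ht', hmemz, heqz⟩ := hproj1 z hz (hyz ▸ (le_of_lt hc))
        have hty : t = (-(ip y wv)) / ip u₁ wv := by
          rw [ip_addsmul] at heqy
          field_simp at heqy ⊢
          linarith
        have htz : t' = (-(ip z wv)) / ip u₁ wv := by
          rw [ip_addsmul] at heqz
          field_simp at heqz ⊢
          linarith
        have htt : t = t' := by rw [hty, htz, hyz]
        have hxe : y - z = (y + t • u₁) - (z + t' • u₁) := by rw [htt]; abel
        rw [hxe]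
        exact Submodule.sub_mem _
          (Submodule.subset_span ⟨hmemy, (hmemeq _ hmemy).mpr heqy⟩)
          (Submodule.subset_span ⟨hmemz, (hmemeq _ hmemz).mpr heqz⟩)
  have partB : sdim (C ∩ Neq δ) = sdim C - 1 := by
    unfold sdim
    rw [hspanB]
    set V := Submodule.span ℝ C with hV
    set ψ : V →ₗ[ℝ] ℝ := (ipR wv).comp V.subtype with hψ
    have hrange : LinearMap.range ψ = ⊤ := by
      rw [eq_top_iff]
      rintro r -
      refine ⟨(r / ip u₀ wv) • ⟨u₀, Submodule.subset_span hu₀C⟩, ?_⟩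
      have : ψ ((r / ip u₀ wv) • ⟨u₀, Submodule.subset_span hu₀C⟩)
          = (r / ip u₀ wv) * ip u₀ wv := by
        simp [hψ, ip_smul_left]
      rw [this, div_mul_cancel₀ r (ne_of_lt hφu₀neg)]
    have hkermap : (LinearMap.ker ψ).map V.subtype = V ⊓ LinearMap.ker (ipR wv) := by
      rw [hψ, LinearMap.ker_comp, Submodule.map_comap_subtype]
    have hrn := LinearMap.finrank_range_add_finrank_ker ψ
    rw [hrange] at hrn
    rw [finrank_top ℝ ℝ, Module.finrank_self ℝ] at hrn
    rw [← hkermap, Submodule.finrank_map_subtype_eq]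
    omega
  -- Part C : C ∩ Neq δ is a proper exposed face of C ∩ Nle δ
  have partC1 : IsExpFace (C ∩ Nle δ) (C ∩ Neq δ) := by
    refine ⟨wv, ?_⟩
    ext x
    simp only [Set.mem_inter_iff, Set.mem_setOf_eq]
    constructor
    · rintro ⟨hxC, hxeq⟩
      have hx0 : ip x wv = 0 := (hmemeq x hxC).mp hxeq
      refine ⟨⟨hxC, (hmemle x hxC).mpr (le_of_eq hx0)⟩, ?_⟩
      rintro y ⟨hyC, hyle⟩
      rw [hx0]
      exact (hmemle y hyC).mp hyle
    · rintro ⟨⟨hxC, hxle⟩, hmax⟩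
      have h1 : ip x wv ≤ 0 := (hmemle x hxC).mp hxle
      have h2 : (0:ℝ) ≤ ip x wv := by
        have := hmax 0 h0K
        rwa [hφ0] at this
      exact ⟨hxC, (hmemeq x hxC).mpr (le_antisymm h1 h2)⟩
  have partC2 : C ∩ Neq δ ≠ C ∩ Nle δ := by
    intro heq
    have : u₀ ∈ C ∩ Neq δ := heq ▸ hu₀K
    have := (hmemeq u₀ hu₀C).mp this.2
    exact absurd this (ne_of_lt hφu₀neg)
  -- Part D : C ∩ Neq δ is not contained in any proper exposed face of C
  have partD : ∀ F : Set (Fin n → ℝ), IsExpFace C F → F ≠ C → ¬ (C ∩ Neq δ ⊆ F) := by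
    rintro F ⟨v, rfl⟩ hFne hsub
    have h0F := hsub h0E
    have h0max : ∀ y ∈ C, ip y v ≤ 0 := by
      intro y hy
      have := h0F.2 y hy
      rwa [ip_zero_left] at this
    obtain ⟨c, hcC, hcF⟩ : ∃ c ∈ C, c ∉ {x ∈ C | ∀ y ∈ C, ip y v ≤ ip x v} := by
      by_contra h
      push_neg at h
      exact hFne (Set.Subset.antisymm (Set.sep_subset _ _) h)
    have hcv : ip c v < 0 := by
      simp only [Set.mem_setOf_eq, not_and, not_forall] at hcF
      obtain ⟨y, hyC, hy⟩ := hcF hcC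
      exact lt_of_lt_of_le (not_le.mp hy) (h0max y hyC)
    have hcontr : ∀ e : Fin n → ℝ, e ∈ C → ip e wv = 0 → ∀ t : ℝ, 0 ≤ t →
        (e = c + t • u₀ ∨ e = c + t • u₁) → False := by
      intro e heC hewv t ht hor
      have heF := hsub ⟨heC, (hmemeq e heC).mpr hewv⟩
      have h1 : ip e v ≤ ip c v := by
        rcases hor with rfl | rfl
        · rw [ip_addsmul]
          nlinarith [h0max u₀ hu₀C]
        · rw [ip_addsmul]
          nlinarith [h0max u₁ hu₁C]
      have h2 := heF.2 0 hC0
      rw [ip_zero_left] at h2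
      linarith
    rcases le_or_gt (ip c wv) 0 with h | h
    · obtain ⟨t, ht, hmem, heq⟩ := hproj1 c hcC h
      exact hcontr _ hmem heq t ht (Or.inr rfl)
    · obtain ⟨t, ht, hmem, heq⟩ := hproj0 c hcC (le_of_lt h)
      exact hcontr _ hmem heq t ht (Or.inl rfl)
  -- Part E : other proper exposed faces of C ∩ Nle δ lie in proper exposed faces of C
  have partE : ∀ F' : Set (Fin n → ℝ), IsExpFace (C ∩ Nle δ) F' → F' ≠ C ∩ Nle δ →
      F' ≠ C ∩ Neq δ → ∃ F : Set (Fin n → ℝ), IsExpFace C F ∧ F ≠ C ∧ F' ⊆ F := by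
    rintro F' ⟨v, rfl⟩ hne1 hne2
    set K := C ∩ Nle δ with hKdef
    by_cases hpos : ∃ y ∈ K, 0 < ip y v
    · -- the face is empty : send it into a coordinate face of C
      obtain ⟨y, hyK, hyv⟩ := hpos
      have hempty : {x ∈ K | ∀ y' ∈ K, ip y' v ≤ ip x v} = ∅ := by
        rw [Set.eq_empty_iff_forall_notMem]
        rintro x ⟨hxK, hxmax⟩
        set t := max 1 ((ip x v + 1) / ip y v) with htdef
        have ht1 : (1:ℝ) ≤ t := le_max_left _ _
        have ht0 : (0:ℝ) ≤ t := by linarith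
        have htyC : t • y ∈ C := hCsmul t ht0 y hyK.1
        have htyK : t • y ∈ K := by
          refine ⟨htyC, (hmemle _ htyC).mpr ?_⟩
          rw [ip_smul_left]
          exact mul_nonpos_of_nonneg_of_nonpos ht0 ((hmemle y hyK.1).mp hyK.2)
        have hcon := hxmax (t • y) htyK
        rw [ip_smul_left] at hcon
        have hbig : ip x v + 1 ≤ t * ip y v := by
          rcases le_total ((ip x v + 1) / ip y v) 1 with hr | hr
          · have h1 : ip x v + 1 ≤ ip y v := (div_le_one hyv).mp hr
            have htt : t = 1 := by rw [htdef]; exact max_eq_left hr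
            rw [htt, one_mul]
            exact h1
          · have htt : t = (ip x v + 1) / ip y v := by rw [htdef]; exact max_eq_right hr
            rw [htt, div_mul_cancel₀ _ (ne_of_gt hyv)]
        linarith
      obtain ⟨i, hi⟩ : ∃ i, 0 < u₁ i := by
        by_contra h
        push_neg at h
        apply hu₁ne
        funext i
        exact le_antisymm (h i) (hCsub hu₁C i)
      set ev : Fin n → ℝ := fun j => if j = i then -1 else 0 with hev
      have hipev : ∀ y' : Fin n → ℝ, ip y' ev = -(y' i) := by
        intro y'
        simp [ip, hev, mul_ite, Finset.sum_ite_eq']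
      refine ⟨{x ∈ C | ∀ y' ∈ C, ip y' ev ≤ ip x ev}, ⟨ev, rfl⟩, ?_, ?_⟩
      · intro heq
        have hu₁F : u₁ ∈ {x ∈ C | ∀ y' ∈ C, ip y' ev ≤ ip x ev} := by rw [heq]; exact hu₁C
        have := hu₁F.2 0 hC0
        rw [ip_zero_left, hipev] at this
        linarith
      · rw [hempty]
        exact Set.empty_subset _
    · push_neg at hpos
      have hchar : ∀ x, x ∈ {x ∈ K | ∀ y ∈ K, ip y v ≤ ip x v} ↔ x ∈ K ∧ ip x v = 0 := by
        intro x
        simp only [Set.mem_setOf_eq]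
        constructor
        · rintro ⟨hxK, hxmax⟩
          have h2 := hxmax 0 h0K
          rw [ip_zero_left] at h2
          exact ⟨hxK, le_antisymm (hpos x hxK) h2⟩
        · rintro ⟨hxK, hx0⟩
          exact ⟨hxK, fun y hy => by rw [hx0]; exact hpos y hy⟩
      obtain ⟨k, hkK, hkF⟩ : ∃ k ∈ K, k ∉ {x ∈ K | ∀ y ∈ K, ip y v ≤ ip x v} := by
        by_contra h
        push_neg at h
        exact hne1 (Set.Subset.antisymm (Set.sep_subset _ _) h)
      have hkv : ip k v < 0 := by
        rcases (hpos k hkK).lt_or_eq with h | h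
        · exact h
        · exact absurd ((hchar k).mpr ⟨hkK, h⟩) hkF
      by_cases hker : ∀ x ∈ {x ∈ K | ∀ y ∈ K, ip y v ≤ ip x v}, ip x wv = 0
      · -- the face lies in C ∩ Neq δ : tilt v by a multiple of wv
        have hsubE : {x ∈ K | ∀ y ∈ K, ip y v ≤ ip x v} ⊆ C ∩ Neq δ := by
          rintro x hx
          exact ⟨hx.1.1, (hmemeq x hx.1.1).mpr (hker x hx)⟩
        obtain ⟨e, heE, heF⟩ : ∃ e ∈ C ∩ Neq δ,
            e ∉ {x ∈ K | ∀ y ∈ K, ip y v ≤ ip x v} := by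
          by_contra h
          push_neg at h
          exact hne2 (Set.Subset.antisymm hsubE h)
        have heφ : ip e wv = 0 := (hmemeq e heE.1).mp heE.2
        have heK : e ∈ K := ⟨heE.1, (hmemle e heE.1).mpr (le_of_eq heφ)⟩
        have hev : ip e v < 0 := by
          rcases (hpos e heK).lt_or_eq with h | h
          · exact h
          · exact absurd ((hchar e).mpr ⟨heK, h⟩) heF
        set G' := G.filter (fun w => ip w wv < 0) with hG'
        have hG'ne : G'.Nonempty := by
          have hrep := hu₀C
          rw [hG] at hrep
          obtain ⟨lam, hlam, hrepr⟩ := hrep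
          by_contra h
          rw [Finset.not_nonempty_iff_eq_empty, Finset.filter_eq_empty_iff] at h
          have : 0 ≤ ip u₀ wv := by
            rw [hrepr, ip_sum_left]
            refine Finset.sum_nonneg fun w hw => ?_
            rw [ip_smul_left]
            exact mul_nonneg (hlam w hw) (not_lt.mp (h hw))
          linarith
        have hG'v : ∀ w ∈ G', ip w v < 0 := by
          intro w hw
          rw [hG', Finset.mem_filter] at hw
          obtain ⟨hwG, hwφ⟩ := hw
          have hwK : w ∈ K := ⟨hGC w hwG, (hmemle w (hGC w hwG)).mpr (le_of_lt hwφ)⟩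
          rcases (hpos w hwK).lt_or_eq with h | h
          · exact h
          · exfalso
            have hwF : w ∈ {x ∈ K | ∀ y ∈ K, ip y v ≤ ip x v} := (hchar w).mpr ⟨hwK, h⟩
            have := hker w hwF
            linarith
        set μ := G'.inf' hG'ne (fun w => ip w v / ip w wv) with hμ
        obtain ⟨ws, hws, hwsval⟩ := Finset.exists_mem_eq_inf' hG'ne (fun w => ip w v / ip w wv)
        have hwsG : ws ∈ G := (Finset.mem_filter.mp hws).1
        have hwsφ : ip ws wv < 0 := by
          have := (Finset.mem_filter.mp hws).2
          simpa using this
        set vt : Fin n → ℝ := v - μ • wv with hvt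
        have hipvt : ∀ x : Fin n → ℝ, ip x vt = ip x v - μ * ip x wv := by
          intro x
          rw [hvt, ip_sub_right, ip_smul_right]
        have hμws : μ * ip ws wv = ip ws v := by
          rw [hμ, hwsval]
          exact div_mul_cancel₀ _ (ne_of_lt hwsφ)
        have hvtG : ∀ w ∈ G, ip w vt ≤ 0 := by
          intro w hw
          rw [hipvt]
          rcases lt_trichotomy (ip w wv) 0 with h | h | h
          · have hwG' : w ∈ G' := by rw [hG', Finset.mem_filter]; exact ⟨hw, h⟩
            have hle : μ ≤ ip w v / ip w wv := by
              rw [hμ]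
              exact Finset.inf'_le _ hwG'
            have hcc : ip w v / ip w wv * ip w wv = ip w v := div_mul_cancel₀ _ (ne_of_lt h)
            nlinarith [mul_nonneg (sub_nonneg.mpr hle) (neg_nonneg.mpr (le_of_lt h))]
          · have hwK : w ∈ K := ⟨hGC w hw, (hmemle w (hGC w hw)).mpr (le_of_eq h)⟩
            rw [h, mul_zero, sub_zero]
            exact hpos w hwK
          · have hyC : (-(ip ws wv)) • w + (ip w wv) • ws ∈ C :=
              hCadd _ (hCsmul _ (by linarith) w (hGC w hw)) _
                (hCsmul _ (le_of_lt h) ws (hGC ws hwsG))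
            have hyφ : ip ((-(ip ws wv)) • w + (ip w wv) • ws) wv = 0 := by
              rw [ip_add_left, ip_smul_left, ip_smul_left]; ring
            have hyv := hpos _ ⟨hyC, (hmemle _ hyC).mpr (le_of_eq hyφ)⟩
            rw [ip_add_left, ip_smul_left, ip_smul_left] at hyv
            nlinarith [hyv, hμws, hwsφ, h]
        have hvtC : ∀ x ∈ C, ip x vt ≤ 0 := fun x hx => hipC x hx vt hvtG
        refine ⟨{x ∈ C | ∀ y ∈ C, ip y vt ≤ ip x vt}, ⟨vt, rfl⟩, ?_, ?_⟩
        · intro heq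
          have heF2 : e ∈ {x ∈ C | ∀ y ∈ C, ip y vt ≤ ip x vt} := by rw [heq]; exact heE.1
          have := heF2.2 0 hC0
          rw [ip_zero_left, hipvt, heφ] at this
          linarith
        · rintro x hx
          have hxv : ip x v = 0 := ((hchar x).mp hx).2
          have hxφ : ip x wv = 0 := hker x hx
          refine ⟨hx.1.1, fun y hy => ?_⟩
          rw [hipvt, hipvt, hxv, hxφ]
          have := hvtC y hy
          rw [hipvt] at this
          linarith
      · -- the face has a point with φ < 0 : v itself is nonpositive on C
        push_neg at hker
        obtain ⟨x₁, hx₁F, hx₁φ⟩ := hker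
        have hx₁K : x₁ ∈ K := hx₁F.1
        have hx₁v : ip x₁ v = 0 := ((hchar x₁).mp hx₁F).2
        have hx₁φneg : ip x₁ wv < 0 :=
          lt_of_le_of_ne ((hmemle x₁ hx₁K.1).mp hx₁K.2) hx₁φ
        have hvG : ∀ w ∈ G, ip w v ≤ 0 := by
          intro w hw
          rcases le_or_gt (ip w wv) 0 with h | h
          · exact hpos w ⟨hGC w hw, (hmemle w (hGC w hw)).mpr h⟩
          · have hyC : (-(ip x₁ wv)) • w + (ip w wv) • x₁ ∈ C :=
              hCadd _ (hCsmul _ (by linarith) w (hGC w hw)) _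
                (hCsmul _ (le_of_lt h) x₁ hx₁K.1)
            have hyφ : ip ((-(ip x₁ wv)) • w + (ip w wv) • x₁) wv = 0 := by
              rw [ip_add_left, ip_smul_left, ip_smul_left]; ring
            have hyv := hpos _ ⟨hyC, (hmemle _ hyC).mpr (le_of_eq hyφ)⟩
            rw [ip_add_left, ip_smul_left, ip_smul_left, hx₁v] at hyv
            nlinarith [hyv, hx₁φneg]
        have hvC : ∀ x ∈ C, ip x v ≤ 0 := fun x hx => hipC x hx v hvG
        refine ⟨{x ∈ C | ∀ y ∈ C, ip y v ≤ ip x v}, ⟨v, rfl⟩, ?_, ?_⟩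
        · intro heq
          have hkF2 : k ∈ {x ∈ C | ∀ y ∈ C, ip y v ≤ ip x v} := by rw [heq]; exact hkK.1
          have := hkF2.2 0 hC0
          rw [ip_zero_left] at this
          linarith
        · rintro x hx
          have hxv : ip x v = 0 := ((hchar x).mp hx).2
          refine ⟨hx.1.1, fun y hy => ?_⟩
          rw [hxv]
          exact hvC y hy
  exact ⟨partA, partB, ⟨partC1, partC2⟩, partD, partE⟩
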